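/- Let q > 0, r > 0, reals 0 < Φ < Φ′, c, c′ ∈ (0,∞), and a < 0. Let W : ℝ → ℝ be nonnegative, Borel measurable, vanish on (−∞,0), satisfy W(z) ≤ c·e^{Φz} for all z ≥ 0 and ∫₀^∞ e^{−Φ′z}W(z)dz = 1/r. Let V : ℝ → ℝ be nonnegative, vanish on (−∞,0), locally integrable, with x ↦ e^{−Φ′x}·V(x) nondecreasing on (0,∞) converging to c′. Set W̄(x):=∫₀ˣW, Z(x):=1+q·W̄(x), Z(x,Φ′):=e^{Φ′x}(1−r∫₀ˣ e^{−Φ′z}W(z)dz), and V̄(b):=∫₀ᵇV. Then lim_{b→∞} [Z(b−a) + r·∫₀ᵇ V(b−y)·Z(y−a) dy − r·Z(−a)·V̄(b)] / V(b) = q·Z(−a,Φ′)/Φ′. -/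

import Mathlib

open MeasureTheory Filter Set

private lemma aux_exp_deriv (k x : ℝ) (hk : k ≠ 0) :
    HasDerivAt (fun y : ℝ => -Real.exp (-k * y) / k) (Real.exp (-k * x)) x := by
  have h1 : HasDerivAt (fun y : ℝ => -k * y) (-k) x := by
    simpa using (hasDerivAt_id x).const_mul (-k)
  have h2 := ((Real.hasDerivAt_exp (-k * x)).comp x h1).neg.div_const k
  refine h2.congr_deriv ?_
  field_simp

private lemma aux_exp_tendsto {k : ℝ} (hk : 0 < k) :
    Tendsto (fun b : ℝ => Real.exp (-k * b)) atTop (nhds 0) := by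
  have h1 : Tendsto (fun b : ℝ => -k * b) atTop atBot := by
    simpa using (tendsto_id (α := ℝ)).const_mul_atTop_of_neg (neg_neg_iff_pos.mpr hk)
  exact Real.tendsto_exp_atBot.comp h1

private lemma aux_exp_Ioi {k : ℝ} (hk : 0 < k) (s : ℝ) :
    ∫ y in Set.Ioi s, Real.exp (-k * y) = Real.exp (-k * s) / k := by
  have h := integral_Ioi_of_hasDerivAt_of_tendsto
    (f := fun y : ℝ => -Real.exp (-k * y) / k) (f' := fun y => Real.exp (-k * y))
    (a := s) (m := 0) ?_ ?_ (exp_neg_integrableOn_Ioi s hk) ?_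
  · rw [h]; ring
  · exact (Continuous.continuousWithinAt (by fun_prop))
  · exact fun x _ => aux_exp_deriv k x hk.ne'
  · have := (aux_exp_tendsto hk).neg.div_const k
    simpa using this

private lemma aux_exp_deriv' (k x : ℝ) (hk : k ≠ 0) :
    HasDerivAt (fun y : ℝ => Real.exp (k * y) / k) (Real.exp (k * x)) x := by
  have h1 : HasDerivAt (fun y : ℝ => k * y) k x := by
    simpa using (hasDerivAt_id x).const_mul k
  have h2 := ((Real.hasDerivAt_exp (k * x)).comp x h1).div_const k
  refine h2.congr_deriv ?_
  field_simp

private lemma aux_locint {W : ℝ → ℝ} {c Φ : ℝ} (hc : 0 < c) (hΦ : 0 < Φ)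
    (hWnn : ∀ x, 0 ≤ W x) (hWm : Measurable W) (hW0 : ∀ x < 0, W x = 0)
    (hWbound : ∀ z ≥ (0:ℝ), W z ≤ c * Real.exp (Φ * z)) :
    LocallyIntegrable W volume := by
  rw [locallyIntegrable_iff]
  intro K hK
  obtain ⟨R, hR⟩ := hK.isBounded.subset_closedBall 0
  have hb : ∀ x ∈ K, ‖W x‖ ≤ c * Real.exp (Φ * R) := by
    intro x hx
    rw [Real.norm_of_nonneg (hWnn x)]
    rcases lt_or_ge x 0 with h | h
    · rw [hW0 x h]; positivity
    · refine (hWbound x h).trans ?_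
      have hxR : x ≤ R := by
        have := hR hx
        simp only [Metric.mem_closedBall, Real.dist_eq, sub_zero] at this
        exact (abs_le.mp this).2
      gcongr
  refine Integrable.mono' (g := fun _ => c * Real.exp (Φ * R))
    (integrableOn_const hK.measure_lt_top.ne)
    (hWm.aestronglyMeasurable.restrict) ?_
  exact (ae_restrict_iff' hK.measurableSet).mpr (ae_of_all _ hb)

private lemma aux_prim_bound {g : ℝ → ℝ} {M Φ : ℝ} (hΦ : 0 < Φ) (hM : 0 ≤ M)
    (hgi : ∀ u v, IntervalIntegrable g volume u v)
    (hbound : ∀ s, 0 ≤ s → g s ≤ M * Real.exp (Φ * s)) {y : ℝ} (hy : 0 ≤ y) :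
    ∫ s in (0:ℝ)..y, g s ≤ M * Real.exp (Φ * y) / Φ := by
  have h1 : ∫ s in (0:ℝ)..y, g s ≤ ∫ s in (0:ℝ)..y, M * Real.exp (Φ * s) := by
    exact intervalIntegral.integral_mono_on hy (hgi 0 y)
      ((Continuous.intervalIntegrable (by fun_prop) 0 y)) (fun x hx => hbound x hx.1)
  have h2 : ∫ s in (0:ℝ)..y, M * Real.exp (Φ * s)
      = M * (Real.exp (Φ * y) / Φ) - M * (Real.exp (Φ * 0) / Φ) := by
    refine intervalIntegral.integral_eq_sub_of_hasDerivAt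
      (f := fun s => M * (Real.exp (Φ * s) / Φ)) (fun x _ => ?_)
      ((Continuous.intervalIntegrable (by fun_prop) 0 y))
    simpa [mul_comm] using (aux_exp_deriv' Φ x hΦ.ne').const_mul M
  rw [h2] at h1
  refine h1.trans ?_
  have : 0 ≤ M * (Real.exp (Φ * 0) / Φ) := by positivity
  rw [mul_div_assoc]
  linarith

section Main
variable {W : ℝ → ℝ} {c Φ Φ' a : ℝ}

private lemma aux_Wii (hc : 0 < c) (hΦ : 0 < Φ)
    (hWnn : ∀ x, 0 ≤ W x) (hWm : Measurable W) (hW0 : ∀ x < 0, W x = 0)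
    (hWbound : ∀ z ≥ (0:ℝ), W z ≤ c * Real.exp (Φ * z)) (u v : ℝ) :
    IntervalIntegrable W volume u v := by
  rw [intervalIntegrable_iff]
  exact ((aux_locint hc hΦ hWnn hWm hW0 hWbound).integrableOn_isCompact
    isCompact_uIcc).mono_set Ioc_subset_Icc_self

private lemma aux_Wa_ii (hc : 0 < c) (hΦ : 0 < Φ)
    (hWnn : ∀ x, 0 ≤ W x) (hWm : Measurable W) (hW0 : ∀ x < 0, W x = 0)
    (hWbound : ∀ z ≥ (0:ℝ), W z ≤ c * Real.exp (Φ * z)) (u v : ℝ) :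
    IntervalIntegrable (fun s => W (s - a)) volume u v := by
  have h := (aux_Wii hc hΦ hWnn hWm hW0 hWbound (u - a) (v - a)).comp_sub_right a
  simpa using h

private lemma aux_G_cont (hc : 0 < c) (hΦ : 0 < Φ)
    (hWnn : ∀ x, 0 ≤ W x) (hWm : Measurable W) (hW0 : ∀ x < 0, W x = 0)
    (hWbound : ∀ z ≥ (0:ℝ), W z ≤ c * Real.exp (Φ * z)) :
    Continuous (fun y => ∫ s in (0:ℝ)..y, W (s - a)) :=
  intervalIntegral.continuous_primitive (aux_Wa_ii hc hΦ hWnn hWm hW0 hWbound) 0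

private lemma aux_G_nonneg (hWnn : ∀ x, 0 ≤ W x) {y : ℝ} (hy : 0 ≤ y) :
    0 ≤ ∫ s in (0:ℝ)..y, W (s - a) :=
  intervalIntegral.integral_nonneg hy (fun s _ => hWnn _)

private lemma aux_G_bound (hc : 0 < c) (hΦ : 0 < Φ) (ha : a < 0)
    (hWnn : ∀ x, 0 ≤ W x) (hWm : Measurable W) (hW0 : ∀ x < 0, W x = 0)
    (hWbound : ∀ z ≥ (0:ℝ), W z ≤ c * Real.exp (Φ * z)) {y : ℝ} (hy : 0 ≤ y) :
    ∫ s in (0:ℝ)..y, W (s - a) ≤ (c * Real.exp (Φ * (-a))) * Real.exp (Φ * y) / Φ := by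
  have hM : 0 ≤ c * Real.exp (Φ * (-a)) := by positivity
  refine aux_prim_bound hΦ hM (aux_Wa_ii hc hΦ hWnn hWm hW0 hWbound) (fun s hs => ?_) hy
  have hsa : (0:ℝ) ≤ s - a := by linarith
  refine (hWbound _ hsa).trans_eq ?_
  rw [mul_assoc, ← Real.exp_add]
  ring_nf

private lemma aux_phi_integrable (hc : 0 < c) (hΦ : 0 < Φ) (hΦΦ' : Φ < Φ') (ha : a < 0)
    (hWnn : ∀ x, 0 ≤ W x) (hWm : Measurable W) (hW0 : ∀ x < 0, W x = 0)
    (hWbound : ∀ z ≥ (0:ℝ), W z ≤ c * Real.exp (Φ * z)) :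
    IntegrableOn (fun y => Real.exp (-Φ' * y) * ∫ s in (0:ℝ)..y, W (s - a))
      (Set.Ioi 0) volume := by
  set C := c * Real.exp (Φ * (-a)) / Φ with hC
  have hCpos : 0 < C := by positivity
  refine Integrable.mono' (g := fun y => C * Real.exp (-(Φ' - Φ) * y))
    ((exp_neg_integrableOn_Ioi 0 (sub_pos.mpr hΦΦ')).const_mul C)
    (((Real.continuous_exp.comp (continuous_const.mul continuous_id)).mul
      (aux_G_cont hc hΦ hWnn hWm hW0 hWbound)).aestronglyMeasurable.restrict) ?_
  refine (ae_restrict_iff' measurableSet_Ioi).mpr (ae_of_all _ (fun y hy => ?_))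
  have hy0 : (0:ℝ) ≤ y := (le_of_lt hy)
  rw [Real.norm_of_nonneg (mul_nonneg (Real.exp_pos _).le (aux_G_nonneg hWnn hy0))]
  have h1 := aux_G_bound hc hΦ ha hWnn hWm hW0 hWbound hy0
  calc Real.exp (-Φ' * y) * ∫ s in (0:ℝ)..y, W (s - a)
      ≤ Real.exp (-Φ' * y) * ((c * Real.exp (Φ * (-a))) * Real.exp (Φ * y) / Φ) := by
        gcongr
    _ = C * Real.exp (-(Φ' - Φ) * y) := by
        rw [hC]
        rw [show (-(Φ' - Φ) * y) = Φ * y + (-Φ' * y) by ring, Real.exp_add]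
        ring

private noncomputable def auxF (Φ' a : ℝ) (W : ℝ → ℝ) (y s : ℝ) : ℝ :=
  (Set.Ioc 0 y).indicator (fun s => Real.exp (-Φ' * y) * W (s - a)) s

private lemma aux_h_integrable (hc : 0 < c) (hΦ : 0 < Φ) (hΦΦ' : Φ < Φ')
    (hWnn : ∀ x, 0 ≤ W x) (hWm : Measurable W)
    (hWbound : ∀ z ≥ (0:ℝ), W z ≤ c * Real.exp (Φ * z)) :
    IntegrableOn (fun t => Real.exp (-Φ' * t) * W t) (Set.Ioi 0) volume := by
  refine Integrable.mono' (g := fun t => c * Real.exp (-(Φ' - Φ) * t))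
    ((exp_neg_integrableOn_Ioi 0 (sub_pos.mpr hΦΦ')).const_mul c)
    (((Real.measurable_exp.comp (measurable_id.const_mul (-Φ'))).mul
      hWm).aestronglyMeasurable.restrict) ?_
  refine (ae_restrict_iff' measurableSet_Ioi).mpr (ae_of_all _ (fun t ht => ?_))
  rw [Real.norm_of_nonneg (mul_nonneg (Real.exp_pos _).le (hWnn t))]
  calc Real.exp (-Φ' * t) * W t ≤ Real.exp (-Φ' * t) * (c * Real.exp (Φ * t)) := by
        gcongr; exact hWbound t (le_of_lt ht)
    _ = c * Real.exp (-(Φ' - Φ) * t) := by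
        rw [show (-(Φ' - Φ) * t) = -Φ' * t + Φ * t by ring, Real.exp_add]; ring

private lemma aux_value (hc : 0 < c) (hΦ : 0 < Φ) (hΦΦ' : Φ < Φ') (ha : a < 0)
    (hWnn : ∀ x, 0 ≤ W x) (hWm : Measurable W) (hW0 : ∀ x < 0, W x = 0)
    (hWbound : ∀ z ≥ (0:ℝ), W z ≤ c * Real.exp (Φ * z)) :
    ∫ y in Set.Ioi (0:ℝ), Real.exp (-Φ' * y) * ∫ s in (0:ℝ)..y, W (s - a)
      = Real.exp (-Φ' * a) * ((∫ t in Set.Ioi (0:ℝ), Real.exp (-Φ' * t) * W t)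
          - ∫ t in Set.Ioc (0:ℝ) (-a), Real.exp (-Φ' * t) * W t) / Φ' := by
  have hΦ' : 0 < Φ' := hΦ.trans hΦΦ'
  have hWa_ii := aux_Wa_ii (a := a) hc hΦ hWnn hWm hW0 hWbound
  set μ := volume.restrict (Set.Ioi (0:ℝ)) with hμ
  -- measurability of the kernel
  have hmeas : AEStronglyMeasurable (Function.uncurry (auxF Φ' a W)) (μ.prod volume) := by
    have h1 : Function.uncurry (auxF Φ' a W)
        = Set.indicator {p : ℝ × ℝ | 0 < p.2 ∧ p.2 ≤ p.1}
          (fun p => Real.exp (-Φ' * p.1) * W (p.2 - a)) := by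
      funext p
      rcases p with ⟨y, s⟩
      simp only [Function.uncurry, auxF, Set.indicator, mem_Ioc, mem_setOf_eq]
    rw [h1]
    have hset : MeasurableSet {p : ℝ × ℝ | 0 < p.2 ∧ p.2 ≤ p.1} := by
      have := (measurableSet_lt (measurable_const (a := (0:ℝ))) measurable_snd).inter
        (measurableSet_le measurable_snd measurable_fst)
      convert this using 1
      rfl
    exact (Measurable.indicator
      ((Real.measurable_exp.comp (measurable_fst.const_mul (-Φ'))).mul
        (hWm.comp (measurable_snd.sub_const a))) hset).aestronglyMeasurable
  -- sections integrable
  have hsec : ∀ y : ℝ, Integrable (fun s => auxF Φ' a W y s) volume := by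
    intro y
    rcases le_or_gt 0 y with hy | hy
    · unfold auxF
      rw [integrable_indicator_iff measurableSet_Ioc]
      exact ((hWa_ii 0 y).1).const_mul _
    · have he : Set.Ioc (0:ℝ) y = ∅ := Ioc_eq_empty (fun h => absurd h (not_lt.mpr hy.le))
      simp [auxF, he]
  -- inner integral over s
  have hli : ∀ y : ℝ, 0 < y →
      ∫ s, auxF Φ' a W y s = Real.exp (-Φ' * y) * ∫ s in (0:ℝ)..y, W (s - a) := by
    intro y hy
    unfold auxF
    rw [integral_indicator measurableSet_Ioc, integral_const_mul,
      intervalIntegral.integral_of_le hy.le]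
  have hnorm_eq : ∀ y : ℝ, 0 < y →
      ∫ s, ‖auxF Φ' a W y s‖ = Real.exp (-Φ' * y) * ∫ s in (0:ℝ)..y, W (s - a) := by
    intro y hy
    have h1 : ∀ s, ‖auxF Φ' a W y s‖ = auxF Φ' a W y s := by
      intro s
      rcases (em (s ∈ Set.Ioc 0 y)) with hs | hs
      · rw [auxF, indicator_of_mem hs,
          Real.norm_of_nonneg (mul_nonneg (Real.exp_pos _).le (hWnn _))]
      · rw [auxF, indicator_of_notMem hs, norm_zero]
    simp_rw [h1]
    exact hli y hy
  have hnormint : Integrable (fun y => ∫ s, ‖auxF Φ' a W y s‖) μ := by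
    refine (aux_phi_integrable hc hΦ hΦΦ' ha hWnn hWm hW0 hWbound).congr ?_
    filter_upwards [ae_restrict_mem measurableSet_Ioi] with y hy
    exact (hnorm_eq y hy).symm
  have hint : Integrable (Function.uncurry (auxF Φ' a W)) (μ.prod volume) :=
    (integrable_prod_iff hmeas).mpr ⟨ae_of_all _ hsec, hnormint⟩
  have hswap := integral_integral_swap hint
  have hL : (∫ y, (∫ s, auxF Φ' a W y s ∂volume) ∂μ)
      = ∫ y in Set.Ioi (0:ℝ), Real.exp (-Φ' * y) * ∫ s in (0:ℝ)..y, W (s - a) := by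
    refine integral_congr_ae ?_
    filter_upwards [ae_restrict_mem measurableSet_Ioi] with y hy
    exact hli y hy
  -- inner integral over y
  have hR : (fun s => ∫ y, auxF Φ' a W y s ∂μ)
      = (Set.Ioi (0:ℝ)).indicator
          (fun s => (Real.exp (-Φ' * s) * W (s - a)) * (1 / Φ')) := by
    funext s
    by_cases hs : 0 < s
    · have h1 : ∀ y : ℝ, auxF Φ' a W y s
          = W (s - a) * (Set.Ici s).indicator (fun y => Real.exp (-Φ' * y)) y := by
        intro y
        rcases le_or_gt s y with hsy | hsy
        · rw [auxF, indicator_of_mem (mem_Ioc.mpr ⟨hs, hsy⟩),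
            indicator_of_mem (mem_Ici.mpr hsy)]
          ring
        · rw [auxF, indicator_of_notMem (fun h => absurd h.2 (not_le.mpr hsy)),
            indicator_of_notMem (fun h => absurd (mem_Ici.mp h) (not_le.mpr hsy))]
          ring
      simp_rw [h1]
      have h2 : Set.Ioi (0:ℝ) ∩ Set.Ici s = Set.Ici s :=
        inter_eq_right.mpr (fun x hx => lt_of_lt_of_le hs hx)
      rw [hμ, integral_const_mul, setIntegral_indicator measurableSet_Ici, h2]
      rw [integral_Ici_eq_integral_Ioi, aux_exp_Ioi hΦ' s,
        indicator_of_mem (mem_Ioi.mpr hs)]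
      ring
    · have h1 : ∀ y : ℝ, auxF Φ' a W y s = 0 := fun y =>
        indicator_of_notMem (fun h => hs h.1) _
      simp_rw [h1]
      rw [integral_zero, indicator_of_notMem (by simpa using hs)]
  -- translation
  have htrans : ∫ s in Set.Ioi (0:ℝ), Real.exp (-Φ' * s) * W (s - a)
      = Real.exp (-Φ' * a) * ∫ t in Set.Ioi (-a), Real.exp (-Φ' * t) * W t := by
    have h1 : (Set.Ioi (0:ℝ)).indicator (fun s => Real.exp (-Φ' * s) * W (s - a))
        = fun s => Real.exp (-Φ' * a)
            * ((Set.Ioi (-a)).indicator (fun t => Real.exp (-Φ' * t) * W t) (s - a)) := by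
      funext s
      by_cases hs : 0 < s
      · rw [indicator_of_mem (mem_Ioi.mpr hs),
          indicator_of_mem (mem_Ioi.mpr (by linarith : -a < s - a))]
        have he : Real.exp (-Φ' * s) = Real.exp (-Φ' * a) * Real.exp (-Φ' * (s - a)) := by
          rw [← Real.exp_add]; congr 1; ring
        rw [he]; ring
      · rw [indicator_of_notMem (by simpa using hs),
          indicator_of_notMem (by simp only [mem_Ioi]; intro h; exact hs (by linarith))]
        ring
    rw [← integral_indicator measurableSet_Ioi, h1, integral_const_mul]
    congr 1
    rw [show (fun s => (Set.Ioi (-a)).indicator (fun t => Real.exp (-Φ' * t) * W t) (s - a))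
        = fun s => ((Set.Ioi (-a)).indicator (fun t => Real.exp (-Φ' * t) * W t)) (s - a)
        from rfl]
    rw [integral_sub_right_eq_self
      ((Set.Ioi (-a)).indicator fun t => Real.exp (-Φ' * t) * W t) a]
    exact integral_indicator measurableSet_Ioi
  -- splitting
  have hsplit : ∫ t in Set.Ioi (0:ℝ), Real.exp (-Φ' * t) * W t
      = (∫ t in Set.Ioc (0:ℝ) (-a), Real.exp (-Φ' * t) * W t)
        + ∫ t in Set.Ioi (-a), Real.exp (-Φ' * t) * W t := by
    have hInt := aux_h_integrable hc hΦ hΦΦ' hWnn hWm hWbound (Φ' := Φ')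
    have h0a : (0:ℝ) < -a := neg_pos.mpr ha
    rw [← Ioc_union_Ioi_eq_Ioi h0a.le]
    exact setIntegral_union (Ioc_disjoint_Ioi le_rfl) measurableSet_Ioi
      (hInt.mono_set Ioc_subset_Ioi_self) (hInt.mono_set (Ioi_subset_Ioi h0a.le))
  rw [← hL, hswap, hR, integral_indicator measurableSet_Ioi, integral_mul_const, htrans]
  rw [show (∫ t in Set.Ioi (-a), Real.exp (-Φ' * t) * W t)
      = (∫ t in Set.Ioi (0:ℝ), Real.exp (-Φ' * t) * W t)
        - ∫ t in Set.Ioc (0:ℝ) (-a), Real.exp (-Φ' * t) * W t by linarith]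
  ring

end Main

/-- Lemma B.3(ii), convergence of `J_a^{(q,r)}(b)/W^{(q+r)}(b)` as `b → ∞`. -/
theorem stmt_11 (q r Φ Φ' c c' a : ℝ) (hq : 0 < q) (hr : 0 < r)
    (hΦ : 0 < Φ) (hΦΦ' : Φ < Φ') (hc : 0 < c) (hc' : 0 < c') (ha : a < 0)
    (W V : ℝ → ℝ) (hWnn : ∀ x, 0 ≤ W x) (hWm : Measurable W) (hW0 : ∀ x < 0, W x = 0)
    (hWbound : ∀ z ≥ (0:ℝ), W z ≤ c * Real.exp (Φ * z))
    (hWlap : (∫ z in Set.Ioi (0:ℝ), Real.exp (-Φ' * z) * W z) = 1 / r)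
    (hVnn : ∀ x, 0 ≤ V x) (hV0 : ∀ x < 0, V x = 0)
    (hVli : LocallyIntegrable V volume)
    (hVmono : MonotoneOn (fun x => Real.exp (-Φ' * x) * V x) (Set.Ioi 0))
    (hVlim : Tendsto (fun x => Real.exp (-Φ' * x) * V x) atTop (nhds c'))
    (Wbar Z ZΦ' Vbar : ℝ → ℝ)
    (hWbar : ∀ x, Wbar x = ∫ y in (0:ℝ)..x, W y)
    (hZ : ∀ x, Z x = 1 + q * Wbar x)
    (hZΦ' : ∀ x, ZΦ' x
      = Real.exp (Φ' * x) * (1 - r * ∫ z in (0:ℝ)..x, Real.exp (-Φ' * z) * W z))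
    (hVbar : ∀ b, Vbar b = ∫ y in (0:ℝ)..b, V y) :
    Tendsto (fun b => (Z (b - a) + r * (∫ y in (0:ℝ)..b, V (b - y) * Z (y - a))
        - r * Z (-a) * Vbar b) / V b)
      atTop (nhds (q * ZΦ' (-a) / Φ')) := by
  have hΦ' : 0 < Φ' := hΦ.trans hΦΦ'
  have h0a : (0:ℝ) < -a := neg_pos.mpr ha
  have hWa_ii := aux_Wa_ii (a := a) hc hΦ hWnn hWm hW0 hWbound
  have hWii := aux_Wii hc hΦ hWnn hWm hW0 hWbound
  set G : ℝ → ℝ := fun y => ∫ s in (0:ℝ)..y, W (s - a) with hG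
  have hGcont : Continuous G := aux_G_cont hc hΦ hWnn hWm hW0 hWbound
  set f : ℝ → ℝ := fun x => Real.exp (-Φ' * x) * V x with hf
  have hVf : ∀ b, V b = f b * Real.exp (Φ' * b) := by
    intro b
    rw [hf]
    show V b = Real.exp (-Φ' * b) * V b * Real.exp (Φ' * b)
    rw [mul_comm (Real.exp (-Φ' * b)) (V b), mul_assoc, ← Real.exp_add]
    rw [show -Φ' * b + Φ' * b = 0 by ring, Real.exp_zero, mul_one]
  have hfpos : ∀ᶠ b in atTop, c' / 2 < f b :=
    hVlim.eventually (eventually_gt_nhds (by linarith))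
  have hVpos : ∀ᶠ b in atTop, 0 < V b := by
    filter_upwards [hfpos] with b hb
    rw [hVf b]
    have h1 : (0:ℝ) < f b := lt_trans (by linarith) hb
    positivity
  set μ := volume.restrict (Set.Ioi (0:ℝ)) with hμ
  set F : ℝ → ℝ → ℝ :=
    fun b y => (Set.Ioc (0:ℝ) b).indicator (fun y => V (b - y) * G y) y / V b with hF
  set φ : ℝ → ℝ := fun y => Real.exp (-Φ' * y) * G y with hφ
  -- Part C : Z (b - a) / V b → 0
  have hC : Tendsto (fun b => Z (b - a) / V b) atTop (nhds 0) := by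
    have hψ : Tendsto (fun b => (1 + q * (c * Real.exp (Φ * (b - a)) / Φ))
        / (c' / 2 * Real.exp (Φ' * b))) atTop (nhds 0) := by
      have heq : (fun b => (1 + q * (c * Real.exp (Φ * (b - a)) / Φ))
          / (c' / 2 * Real.exp (Φ' * b)))
          = fun b => (2 / c') * Real.exp (-Φ' * b)
            + (2 * q * c * Real.exp (Φ * (-a)) / (Φ * c')) * Real.exp (-(Φ' - Φ) * b) := by
        funext b
        have h1 : Real.exp (Φ * (b - a)) = Real.exp (Φ * (-a)) * Real.exp (Φ * b) := by
          rw [← Real.exp_add]; congr 1; ring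
        have h2 : Real.exp (-(Φ' - Φ) * b) = Real.exp (Φ * b) * Real.exp (-Φ' * b) := by
          rw [← Real.exp_add]; congr 1; ring
        have h3 : Real.exp (-Φ' * b) = (Real.exp (Φ' * b))⁻¹ := by
          rw [← Real.exp_neg]; congr 1; ring
        rw [h1, h2, h3]
        field_simp
      rw [heq]
      have t1 := (aux_exp_tendsto hΦ').const_mul (2 / c')
      have t2 := (aux_exp_tendsto (sub_pos.mpr hΦΦ')).const_mul
        (2 * q * c * Real.exp (Φ * (-a)) / (Φ * c'))
      simpa using t1.add t2
    refine squeeze_zero' ?_ ?_ hψ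
    · filter_upwards [hVpos, eventually_ge_atTop (0:ℝ)] with b hVb hb0
      have hWb : (0:ℝ) ≤ Wbar (b - a) := by
        rw [hWbar]
        exact intervalIntegral.integral_nonneg (by linarith) (fun s _ => hWnn s)
      have : (0:ℝ) ≤ Z (b - a) := by rw [hZ]; positivity
      positivity
    · filter_upwards [hfpos, eventually_ge_atTop (0:ℝ)] with b hfb hb0
      have hVb : 0 < V b := by
        rw [hVf b]; have h1 : (0:ℝ) < f b := lt_trans (by linarith) hfb; positivity
      have hnum : Z (b - a) ≤ 1 + q * (c * Real.exp (Φ * (b - a)) / Φ) := by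
        rw [hZ, hWbar]
        have := aux_prim_bound hΦ hc.le hWii (fun s hs => hWbound s hs) (by linarith : (0:ℝ) ≤ b - a)
        nlinarith [this]
      have hden : c' / 2 * Real.exp (Φ' * b) ≤ V b := by
        rw [hVf b]
        gcongr
      have hZnn : (0:ℝ) ≤ Z (b - a) := by
        rw [hZ]
        have hWb : (0:ℝ) ≤ Wbar (b - a) := by
          rw [hWbar]
          exact intervalIntegral.integral_nonneg (by linarith) (fun s _ => hWnn s)
        positivity
      calc Z (b - a) / V b ≤ (1 + q * (c * Real.exp (Φ * (b - a)) / Φ)) / V b := by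
            gcongr
        _ ≤ (1 + q * (c * Real.exp (Φ * (b - a)) / Φ)) / (c' / 2 * Real.exp (Φ' * b)) := by
            have hnum' : (0:ℝ) ≤ 1 + q * (c * Real.exp (Φ * (b - a)) / Φ) := by positivity
            gcongr
  -- Part B : dominated convergence
  have hφint : Integrable φ μ := aux_phi_integrable hc hΦ hΦΦ' ha hWnn hWm hW0 hWbound
  have hDCT : Tendsto (fun b => ∫ y, F b y ∂μ) atTop (nhds (∫ y, φ y ∂μ)) := by
    refine tendsto_integral_filter_of_dominated_convergence φ ?_ ?_ hφint ?_
    · refine Eventually.of_forall (fun b => ?_)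
      have hVb : AEStronglyMeasurable (fun y => V (b - y)) volume :=
        hVli.aestronglyMeasurable.comp_quasiMeasurePreserving
          (MeasureTheory.Measure.measurePreserving_sub_left volume b).quasiMeasurePreserving
      show AEStronglyMeasurable
        (fun y => (Set.Ioc (0:ℝ) b).indicator (fun y => V (b - y) * G y) y / V b) μ
      simp only [div_eq_mul_inv]
      exact (((hVb.mul hGcont.aestronglyMeasurable).indicator
        measurableSet_Ioc).mul aestronglyMeasurable_const).restrict
    · filter_upwards [hfpos] with b hfb
      have hVb : 0 < V b := by
        rw [hVf b]; have h1 : (0:ℝ) < f b := lt_trans (by linarith) hfb; positivity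
      have hne : ∀ᵐ (y : ℝ) ∂volume, y ≠ b := by
        have hs : {y : ℝ | ¬ y ≠ b} = {b} := by ext y; simp [not_not]
        rw [ae_iff, hs]
        exact measure_singleton b
      filter_upwards [ae_restrict_mem measurableSet_Ioi, ae_restrict_of_ae hne] with y hy hyb
      rcases em (y ∈ Set.Ioc 0 b) with hmem | hmem
      · have hyb' : y < b := lt_of_le_of_ne hmem.2 hyb
        have hby : 0 < b - y := by linarith
        have hy0 : (0:ℝ) < y := hy
        have hmono : f (b - y) ≤ f b :=
          hVmono (mem_Ioi.mpr hby) (mem_Ioi.mpr (by linarith)) (by linarith)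
        have hVby : V (b - y) ≤ Real.exp (-Φ' * y) * V b := by
          rw [hVf (b - y), hVf b]
          calc f (b - y) * Real.exp (Φ' * (b - y))
              ≤ f b * Real.exp (Φ' * (b - y)) := by gcongr
            _ = Real.exp (-Φ' * y) * (f b * Real.exp (Φ' * b)) := by
                rw [show Real.exp (Φ' * (b - y))
                    = Real.exp (-Φ' * y) * Real.exp (Φ' * b) by
                  rw [← Real.exp_add]; congr 1; ring]
                ring
        have hGy : 0 ≤ G y := aux_G_nonneg hWnn hy0.le
        show ‖(Set.Ioc (0:ℝ) b).indicator (fun y => V (b - y) * G y) y / V b‖ ≤ φ y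
        rw [indicator_of_mem hmem,
          Real.norm_of_nonneg (div_nonneg (mul_nonneg (hVnn _) hGy) hVb.le),
          div_le_iff₀ hVb]
        calc V (b - y) * G y ≤ (Real.exp (-Φ' * y) * V b) * G y := by gcongr
          _ = (Real.exp (-Φ' * y) * G y) * V b := by ring
      · show ‖(Set.Ioc (0:ℝ) b).indicator (fun y => V (b - y) * G y) y / V b‖ ≤ φ y
        rw [indicator_of_notMem hmem, zero_div, norm_zero]
        exact mul_nonneg (Real.exp_pos _).le (aux_G_nonneg hWnn (le_of_lt hy))
    · refine (ae_restrict_mem measurableSet_Ioi).mono (fun y hy => ?_)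
      have hy0 : (0:ℝ) < y := hy
      have h1 : Tendsto (fun b => f (b - y)) atTop (nhds c') := by
        have := hVlim.comp (tendsto_atTop_add_const_right atTop (-y) tendsto_id)
        refine this.congr (fun b => ?_)
        simp [hf, sub_eq_add_neg]
      have h2 : Tendsto (fun b => f (b - y) / f b * (Real.exp (-Φ' * y) * G y)) atTop
          (nhds (Real.exp (-Φ' * y) * G y)) := by
        have h3 := (h1.div hVlim (ne_of_gt hc')).mul_const (Real.exp (-Φ' * y) * G y)
        rw [div_self (ne_of_gt hc'), one_mul] at h3
        exact h3
      refine h2.congr' ?_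
      filter_upwards [hfpos, eventually_gt_atTop y] with b hfb hby
      have hfbpos : (0:ℝ) < f b := lt_trans (by linarith) hfb
      have hVb : 0 < V b := by rw [hVf b]; positivity
      have hmem : y ∈ Set.Ioc (0:ℝ) b := ⟨hy0, hby.le⟩
      show f (b - y) / f b * (Real.exp (-Φ' * y) * G y)
          = (Set.Ioc (0:ℝ) b).indicator (fun y => V (b - y) * G y) y / V b
      rw [indicator_of_mem hmem]
      have e1 : f (b - y) = Real.exp (-Φ' * (b - y)) * V (b - y) := rfl
      have e2 : f b = Real.exp (-Φ' * b) * V b := rfl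
      have e3 : Real.exp (-Φ' * (b - y)) * Real.exp (-Φ' * y) = Real.exp (-Φ' * b) := by
        rw [← Real.exp_add]; congr 1; ring
      rw [e1, e2]
      rw [div_mul_eq_mul_div, div_eq_div_iff (by positivity) (ne_of_gt hVb)]
      calc Real.exp (-Φ' * (b - y)) * V (b - y) * (Real.exp (-Φ' * y) * G y) * V b
          = (Real.exp (-Φ' * (b - y)) * Real.exp (-Φ' * y)) * (V (b - y) * G y * V b) := by
            ring
        _ = V (b - y) * G y * (Real.exp (-Φ' * b) * V b) := by rw [e3]; ring
  -- Part A : algebraic identity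
  have hVb_ii : ∀ b : ℝ, IntervalIntegrable (fun y => V (b - y)) volume 0 b := by
    intro b
    have h1 : IntervalIntegrable V volume b 0 := by
      rw [intervalIntegrable_iff]
      exact (hVli.integrableOn_isCompact isCompact_uIcc).mono_set Ioc_subset_Icc_self
    have h2 := h1.comp_sub_left b
    simpa using h2
  have hZsplit : ∀ y : ℝ, Z (y - a) = Z (-a) + q * G y := by
    intro y
    rw [hZ, hZ]
    rw [hWbar, hWbar]
    have h1 : G y = ∫ s in (-a)..(y - a), W s := by
      rw [hG]
      simpa using intervalIntegral.integral_comp_sub_right (a := (0:ℝ)) (b := y) W a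
    have h2 : (∫ s in (0:ℝ)..(-a), W s) + (∫ s in (-a)..(y - a), W s)
        = ∫ s in (0:ℝ)..(y - a), W s :=
      intervalIntegral.integral_add_adjacent_intervals (hWii 0 (-a)) (hWii (-a) (y - a))
    rw [h1, ← h2]
    ring
  have hIdent : ∀ᶠ b in atTop,
      (Z (b - a) + r * (∫ y in (0:ℝ)..b, V (b - y) * Z (y - a)) - r * Z (-a) * Vbar b) / V b
        = Z (b - a) / V b + (q * r) * ∫ y, F b y ∂μ := by
    filter_upwards [eventually_ge_atTop (0:ℝ)] with b hb0
    have hVbar' : Vbar b = ∫ y in (0:ℝ)..b, V (b - y) := by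
      rw [hVbar]
      have h := intervalIntegral.integral_comp_sub_left (a := (0:ℝ)) (b := b) V b
      simpa using h.symm
    have hint1 : IntervalIntegrable (fun y => V (b - y) * G y) volume 0 b :=
      (hVb_ii b).mul_continuousOn hGcont.continuousOn
    have hint2 : IntervalIntegrable (fun y => V (b - y) * Z (-a)) volume 0 b :=
      (hVb_ii b).mul_const _
    have hsplit2 : ∫ y in (0:ℝ)..b, V (b - y) * Z (y - a)
        = Z (-a) * (∫ y in (0:ℝ)..b, V (b - y)) + q * ∫ y in (0:ℝ)..b, V (b - y) * G y := by
      have h1 : ∀ y, V (b - y) * Z (y - a)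
          = V (b - y) * Z (-a) + q * (V (b - y) * G y) := by
        intro y; rw [hZsplit y]; ring
      rw [intervalIntegral.integral_congr (fun y _ => h1 y),
        intervalIntegral.integral_add hint2 (hint1.const_mul q),
        intervalIntegral.integral_const_mul]
      have : ∫ y in (0:ℝ)..b, V (b - y) * Z (-a)
          = (∫ y in (0:ℝ)..b, V (b - y)) * Z (-a) := intervalIntegral.integral_mul_const _ _
      rw [this]
      ring
    have hFb : ∫ y, F b y ∂μ = (∫ y in (0:ℝ)..b, V (b - y) * G y) / V b := by
      rw [hF]
      show (∫ y, (Set.Ioc (0:ℝ) b).indicator (fun y => V (b - y) * G y) y / V b ∂μ) = _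
      rw [integral_div]
      congr 1
      have h9 : Set.Ioi (0:ℝ) ∩ Set.Ioc 0 b = Set.Ioc 0 b :=
        inter_eq_right.mpr (fun x (hx : x ∈ Set.Ioc (0:ℝ) b) => hx.1)
      rw [hμ, setIntegral_indicator measurableSet_Ioc, h9,
        intervalIntegral.integral_of_le hb0]
    rw [hsplit2, hVbar', hFb]
    ring
  -- assemble
  have hval : (0:ℝ) + (q * r) * ∫ y, φ y ∂μ = q * ZΦ' (-a) / Φ' := by
    have h1 : ∫ y, φ y ∂μ
        = Real.exp (-Φ' * a) * ((1 / r)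
            - ∫ t in Set.Ioc (0:ℝ) (-a), Real.exp (-Φ' * t) * W t) / Φ' := by
      rw [hμ, ← hWlap]
      exact aux_value hc hΦ hΦΦ' ha hWnn hWm hW0 hWbound
    have h2 : ZΦ' (-a) = Real.exp (-Φ' * a)
        * (1 - r * ∫ t in Set.Ioc (0:ℝ) (-a), Real.exp (-Φ' * t) * W t) := by
      rw [hZΦ', intervalIntegral.integral_of_le h0a.le]
      congr 2
      ring
    rw [h1, h2]
    field_simp
    ring
  have hlim := hC.add (hDCT.const_mul (q * r))
  rw [hval] at hlim
  exact Tendsto.congr' (EventuallyEq.symm hIdent) hlim
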